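/- Let d, m, n be positive natural numbers with m ≤ n. Identify (ℂ^d)^{⊗n} with (ℂ^d)^{⊗m} ⊗ (ℂ^d)^{⊗(n−m)} by indexing with ((Fin m → Fin d) × (Fin (n−m) → Fin d)) and letting permutations of Fin m ⊕ Fin (n−m) act; let Π_sym^{n,d} = (1/n!) · Σ over all σ ∈ Equiv.Perm (Fin m ⊕ Fin (n−m)) of P_σ, and let Π_sym^{m,d} = (1/m!) · Σ_{σ ∈ Equiv.Perm (Fin m)} P_σ. Then the partial trace of Π_sym^{n,d} over the second factor (Fin (n−m) → Fin d) equals (d[n] / d[m]) · Π_sym^{m,d}, where d[k] = (k + d − 1).choose k. -/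

import Mathlib

open Matrix

/-- Permutation matrix of `σ` acting on `(ℂ^d)^{⊗ι}`, indexed by `ι → Fin d`. -/
noncomputable def permMatrix (d : ℕ) {ι : Type*} [Fintype ι] [DecidableEq ι]
    (σ : Equiv.Perm ι) : Matrix (ι → Fin d) (ι → Fin d) ℂ :=
  Matrix.of fun a b => if a ∘ σ = b then 1 else 0

/-- The symmetrizer on `(ℂ^d)^{⊗m}`. -/
noncomputable def symmetrizer (d m : ℕ) :
    Matrix (Fin m → Fin d) (Fin m → Fin d) ℂ :=
  ((m.factorial : ℂ)⁻¹) • ∑ σ : Equiv.Perm (Fin m), permMatrix d σ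

/-- The symmetrizer on `(ℂ^d)^{⊗m} ⊗ (ℂ^d)^{⊗k}`, with permutations of `Fin m ⊕ Fin k`
acting on the product index `(Fin m → Fin d) × (Fin k → Fin d)`. -/
noncomputable def symmetrizerSplit (d m k : ℕ) :
    Matrix ((Fin m → Fin d) × (Fin k → Fin d)) ((Fin m → Fin d) × (Fin k → Fin d)) ℂ :=
  (((m + k).factorial : ℂ)⁻¹) • ∑ σ : Equiv.Perm (Fin m ⊕ Fin k),
    Matrix.of fun p q =>
      if Sum.elim p.1 p.2 ∘ σ = Sum.elim q.1 q.2 then (1 : ℂ) else 0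

/-- Partial trace over the second tensor factor. -/
noncomputable def partialTraceSnd {α β : Type*} [Fintype β]
    (X : Matrix (α × β) (α × β) ℂ) : Matrix α α ℂ :=
  Matrix.of fun a a' => ∑ b, X (a, b) (a', b)

open Finset

/-- Fiber cardinality of a function `ι → Fin d`. -/
def fib {ι : Type*} [Fintype ι] {d : ℕ} (c : ι → Fin d) (j : Fin d) : ℕ :=
  Fintype.card {x // c x = j}

lemma fib_eq_sum {ι : Type*} [Fintype ι] [DecidableEq ι] {d : ℕ} (c : ι → Fin d) (j : Fin d) :
    fib c j = ∑ x, if c x = j then 1 else 0 := by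
  rw [fib, Fintype.card_subtype, Finset.card_filter]

lemma fib_sum_elim {m k d : ℕ} (a : Fin m → Fin d) (b : Fin k → Fin d) (j : Fin d) :
    fib (Sum.elim a b) j = fib a j + fib b j := by
  simp only [fib_eq_sum, Fintype.sum_sum_type, Sum.elim_inl, Sum.elim_inr]
  rfl

lemma sum_fib {ι : Type*} [Fintype ι] [DecidableEq ι] {d : ℕ} (c : ι → Fin d) :
    ∑ j, fib c j = Fintype.card ι := by
  simp only [fib_eq_sum]
  rw [Finset.sum_comm]
  simp

def permFiberEquiv {ι : Type*} [Fintype ι] [DecidableEq ι] {d : ℕ} (c c' : ι → Fin d) :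
    {σ : Equiv.Perm ι // c ∘ σ = c'} ≃ ∀ j, ({x // c' x = j} ≃ {x // c x = j}) where
  toFun σ j := Equiv.subtypeEquiv σ.1 (fun x => by
    have h := congrFun σ.2 x
    simp only [Function.comp_apply] at h
    constructor
    · intro hx; rw [h, hx]
    · intro hx; rw [← h, hx])
  invFun e := ⟨(Equiv.sigmaFiberEquiv c').symm.trans
      ((Equiv.sigmaCongrRight e).trans (Equiv.sigmaFiberEquiv c)), by
    funext x
    exact (e (c' x) ⟨x, rfl⟩).2⟩
  left_inv σ := by
    apply Subtype.ext; apply Equiv.ext; intro x; rfl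
  right_inv e := by
    funext j; apply Equiv.ext; intro x
    apply Subtype.ext
    obtain ⟨x, hx⟩ := x
    subst hx
    rfl

lemma card_perm_comp {ι : Type*} [Fintype ι] [DecidableEq ι] {d : ℕ} (c c' : ι → Fin d) :
    Fintype.card {σ : Equiv.Perm ι // c ∘ σ = c'} =
      if ∀ j, fib c j = fib c' j then ∏ j, (fib c j).factorial else 0 := by
  rw [Fintype.card_congr (permFiberEquiv c c'), Fintype.card_pi]
  split_ifs with h
  · refine Finset.prod_congr rfl fun j _ => ?_
    obtain ⟨e⟩ := Fintype.card_eq.mp (h j).symm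
    rw [Fintype.card_equiv e]
    exact congrArg _ (h j).symm
  · push_neg at h
    obtain ⟨j, hj⟩ := h
    apply Finset.prod_eq_zero (Finset.mem_univ j)
    rw [Fintype.card_eq_zero_iff]
    exact ⟨fun e => hj (Fintype.card_congr e.symm)⟩

lemma sum_perm_ite {ι : Type*} [Fintype ι] [DecidableEq ι] {d : ℕ} (c c' : ι → Fin d) :
    (∑ σ : Equiv.Perm ι, if c ∘ σ = c' then (1:ℂ) else 0) =
      if ∀ j, fib c j = fib c' j then ((∏ j, (fib c j).factorial : ℕ) : ℂ) else 0 := by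
  rw [Finset.sum_boole]
  rw [← Fintype.card_subtype, card_perm_comp]
  split_ifs <;> simp

lemma prod_factorial_add_ite {d : ℕ} (C : Fin d → ℕ) (x : Fin d) :
    ∏ j, (C j + if x = j then 1 else 0).factorial = (C x + 1) * ∏ j, (C j).factorial := by
  rw [← Finset.mul_prod_erase univ (fun j => (C j + if x = j then 1 else 0).factorial)
    (Finset.mem_univ x), ← Finset.mul_prod_erase univ (fun j => (C j).factorial)
    (Finset.mem_univ x)]
  rw [if_pos rfl, Nat.factorial_succ, mul_assoc]
  congr 1
  congr 1
  exact Finset.prod_congr rfl fun j hj => by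
    rw [if_neg (fun h => (Finset.mem_erase.mp hj).1 h.symm), Nat.add_zero]

lemma key_count (d : ℕ) : ∀ (k : ℕ) (A : Fin d → ℕ),
    ∑ b : Fin k → Fin d, ∏ j, (A j + fib b j).factorial
      = (∏ i ∈ Finset.range k, ((∑ j, A j) + d + i)) * ∏ j, (A j).factorial := by
  intro k
  induction k with
  | zero => intro A; simp [fib]
  | succ k ih =>
    intro A
    rw [← Fintype.sum_equiv (Fin.consEquiv (fun _ => Fin d))
      (fun p => ∏ j, (A j + fib (Fin.cons p.1 p.2) j).factorial)
      (fun b => ∏ j, (A j + fib b j).factorial) (fun p => rfl)]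
    rw [Fintype.sum_prod_type]
    have hfib : ∀ (x : Fin d) (b : Fin k → Fin d) (j : Fin d),
        fib (Fin.cons x b : Fin (k+1) → Fin d) j = fib b j + if x = j then 1 else 0 := by
      intro x b j
      simp only [fib_eq_sum, Fin.sum_univ_succ, Fin.cons_zero, Fin.cons_succ]
      rw [add_comm]
    have step : ∀ x : Fin d, ∑ b : Fin k → Fin d,
        ∏ j, (A j + fib (Fin.cons x b : Fin (k+1) → Fin d) j).factorial
        = ∑ b : Fin k → Fin d, (A x + fib b x + 1) * ∏ j, (A j + fib b j).factorial := by
      intro x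
      refine Finset.sum_congr rfl fun b _ => ?_
      have : ∀ j, A j + fib (Fin.cons x b : Fin (k+1) → Fin d) j
          = (A j + fib b j) + if x = j then 1 else 0 := by
        intro j; rw [hfib, add_assoc]
      simp only [this]
      exact prod_factorial_add_ite (fun j => A j + fib b j) x
    simp only [step]
    rw [Finset.sum_comm]
    have inner : ∀ b : Fin k → Fin d,
        ∑ x, (A x + fib b x + 1) * ∏ j, (A j + fib b j).factorial
        = ((∑ j, A j) + d + k) * ∏ j, (A j + fib b j).factorial := by
      intro b
      rw [← Finset.sum_mul]
      congr 1
      have h1 : ∑ x, (A x + fib b x + 1) = (∑ x, A x) + (∑ x, fib b x) + d := by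
        rw [Finset.sum_add_distrib, Finset.sum_add_distrib]
        simp
      rw [h1, sum_fib]
      simp [Fintype.card_fin]
      omega
    simp only [inner]
    rw [← Finset.mul_sum, ih A, Finset.prod_range_succ]
    ring

lemma fact_prod (t : ℕ) : ∀ k : ℕ, t.factorial * ∏ i ∈ Finset.range k, (t + 1 + i) = (t + k).factorial := by
  intro k
  induction k with
  | zero => simp
  | succ k ih =>
    rw [Finset.prod_range_succ, ← mul_assoc, ih]
    rw [show t + (k+1) = (t + k) + 1 from rfl, Nat.factorial_succ]
    ring

lemma nat_key (d m k : ℕ) (hd : 0 < d) :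
    m.factorial * ((m + d - 1).choose m) * ∏ i ∈ Finset.range k, (m + d + i)
      = (m + k).factorial * ((m + k + d - 1).choose (m + k)) := by
  have h1 : (m + d - 1).choose m * m.factorial * (d-1).factorial = (m + d - 1).factorial := by
    have := Nat.choose_mul_factorial_mul_factorial (show m ≤ m + d - 1 by omega)
    rwa [show m + d - 1 - m = d - 1 by omega] at this
  have h2 : (m + k + d - 1).choose (m + k) * (m + k).factorial * (d-1).factorial
      = (m + k + d - 1).factorial := by
    have := Nat.choose_mul_factorial_mul_factorial (show m + k ≤ m + k + d - 1 by omega)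
    rwa [show m + k + d - 1 - (m + k) = d - 1 by omega] at this
  have h3 : (m + d - 1).factorial * ∏ i ∈ Finset.range k, (m + d + i)
      = (m + k + d - 1).factorial := by
    have := fact_prod (m + d - 1) k
    rw [Finset.prod_congr rfl (fun i _ => show m + d - 1 + 1 + i = m + d + i by omega)] at this
    rwa [show m + d - 1 + k = m + k + d - 1 by omega] at this
  apply Nat.eq_of_mul_eq_mul_right (Nat.factorial_pos (d-1))
  calc m.factorial * ((m + d - 1).choose m) * (∏ i ∈ Finset.range k, (m + d + i)) * (d-1).factorial
      = ((m + d - 1).choose m * m.factorial * (d-1).factorial) * ∏ i ∈ Finset.range k, (m + d + i) := by ring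
    _ = (m + k + d - 1).factorial := by rw [h1, h3]
    _ = (m + k).factorial * ((m + k + d - 1).choose (m + k)) * (d-1).factorial := by
        rw [← h2]; ring

theorem partialTrace_symmetrizer (d m n : ℕ) (hd : 0 < d) (hm : 0 < m) (hn : 0 < n)
    (hmn : m ≤ n) :
    partialTraceSnd (symmetrizerSplit d m (n - m))
      = (((n + d - 1).choose n : ℂ) / ((m + d - 1).choose m : ℂ)) • symmetrizer d m := by
  obtain ⟨k, rfl⟩ : ∃ k, n = m + k := ⟨n - m, by omega⟩
  rw [show m + k - m = k by omega]
  ext a a'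
  simp only [partialTraceSnd, symmetrizerSplit, symmetrizer, permMatrix, Matrix.of_apply,
    Matrix.smul_apply, Matrix.sum_apply, smul_eq_mul]
  rw [sum_perm_ite a a']
  have hinner : ∀ b : Fin k → Fin d,
      (∑ σ : Equiv.Perm (Fin m ⊕ Fin k),
        if Sum.elim a b ∘ σ = Sum.elim a' b then (1:ℂ) else 0)
      = if ∀ j, fib a j = fib a' j
        then ((∏ j, (fib a j + fib b j).factorial : ℕ) : ℂ) else 0 := by
    intro b
    rw [sum_perm_ite (Sum.elim a b) (Sum.elim a' b)]
    simp only [fib_sum_elim]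
    congr 1
    · simp only [eq_iff_iff]
      constructor
      · intro h j; have := h j; omega
      · intro h j; rw [h j]
  simp only [hinner]
  by_cases h : ∀ j, fib a j = fib a' j
  · simp only [if_pos h]
    rw [← Finset.mul_sum, ← Nat.cast_sum]
    rw [key_count d k (fun j => fib a j)]
    rw [show (∑ j, fib a j) = m from by rw [sum_fib]; simp]
    have hCm : ((m + d - 1).choose m : ℂ) ≠ 0 := by
      exact_mod_cast Nat.cast_ne_zero.mpr (Nat.choose_pos (show m ≤ m + d - 1 by omega)).ne'
    have hfm : ((m.factorial : ℂ)) ≠ 0 := Nat.cast_ne_zero.mpr (Nat.factorial_pos m).ne'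
    have hfn : (((m+k).factorial : ℂ)) ≠ 0 := Nat.cast_ne_zero.mpr (Nat.factorial_pos (m+k)).ne'
    have hnat := nat_key d m k hd
    have hnatC : (m.factorial : ℂ) * ((m + d - 1).choose m) * ∏ i ∈ Finset.range k, ((m : ℂ) + d + i)
        = ((m + k).factorial : ℂ) * ((m + k + d - 1).choose (m + k)) := by
      exact_mod_cast congrArg (Nat.cast : ℕ → ℂ) hnat
    push_cast
    field_simp
    ring_nf
    ring_nf at hnatC
    linear_combination (∏ j, ((fib a j).factorial : ℂ)) * hnatC
  · simp [if_neg h]
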